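/- arXiv:1906.00395 — 6 statements merged into one kernel-verified Lean document; each statement's English description precedes it below -/
import Mathlib

section
/- Let (X, p) be a partial metric space. Define G_p(x,y,z) = p(x,y) + p(y,z) + p(x,z) - p(x,x) - p(y,y) - p(z,z) for all x,y,z ∈ X. Then (X, G_p) is a G-metric space which is symmetric, i.e., G_p(x,y,y) = G_p(y,x,x) for all x,y ∈ X. -/
open Filter Topology

/-- A partial metric (Matthews): P1–P4, nonnegative real-valued. -/
def IsPartialMetric {X : Type*} (p : X → X → ℝ) : Prop :=
  (∀ x y, 0 ≤ p x y) ∧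
  (∀ x y, x = y ↔ (p x x = p x y ∧ p x y = p y y)) ∧
  (∀ x y, p x x ≤ p x y) ∧
  (∀ x y, p x y = p y x) ∧
  (∀ x y z, p x z ≤ p x y + p y z - p y y)

/-- A G-metric (Mustafa–Sims): G1–G5, nonnegative real-valued. -/
def IsGMetric {X : Type*} (G : X → X → X → ℝ) : Prop :=
  (∀ x y z, 0 ≤ G x y z) ∧
  (∀ x, G x x x = 0) ∧
  (∀ x y, x ≠ y → 0 < G x x y) ∧
  (∀ x y z, z ≠ y → G x x y ≤ G x y z) ∧
  (∀ x y z, G x y z = G y x z ∧ G x y z = G x z y) ∧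
  (∀ x y z a, G x y z ≤ G x a a + G a y z)

/-- A GP-metric (Zand–Nezhad): GP1–GP4, nonnegative real-valued. -/
def IsGPMetric {X : Type*} (G : X → X → X → ℝ) : Prop :=
  (∀ x y z, 0 ≤ G x y z) ∧
  (∀ x y z, G x x x ≤ G x x y ∧ G x x y ≤ G x y z) ∧
  (∀ x y z, G x y z = G y x z ∧ G x y z = G x z y) ∧
  (∀ x y z a, G x y z ≤ G x a a + G a y z - G a a a) ∧
  (∀ x y z, G x y z = G x x x → G x y z = G y y y → G x y z = G z z z → x = y ∧ y = z)

/-- Cauchy sequence in a partial metric space: lim_{n,m} p(x_n,x_m) exists (finite). -/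
def PCauchy {X : Type*} (p : X → X → ℝ) (s : ℕ → X) : Prop :=
  ∃ a : ℝ, Tendsto (fun nm : ℕ × ℕ => p (s nm.1) (s nm.2)) atTop (nhds a)

/-- Completeness of a partial metric space. -/
def PComplete {X : Type*} (p : X → X → ℝ) : Prop :=
  ∀ s : ℕ → X, PCauchy p s → ∃ x : X,
    Tendsto (fun nm : ℕ × ℕ => p (s nm.1) (s nm.2)) atTop (nhds (p x x))

/-- G-Cauchy sequence in a G-metric space. -/
def GCauchy {X : Type*} (G : X → X → X → ℝ) (s : ℕ → X) : Prop :=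
  ∀ ε : ℝ, 0 < ε → ∃ k : ℕ, ∀ n ≥ k, ∀ m ≥ k, ∀ l ≥ k, G (s n) (s m) (s l) < ε

/-- G-convergence in a G-metric space. -/
def GConvergesTo {X : Type*} (G : X → X → X → ℝ) (s : ℕ → X) (x : X) : Prop :=
  ∀ ε : ℝ, 0 < ε → ∃ k : ℕ, ∀ n ≥ k, ∀ m ≥ k, G x (s n) (s m) < ε

/-- G-completeness. -/
def GComplete {X : Type*} (G : X → X → X → ℝ) : Prop :=
  ∀ s : ℕ → X, GCauchy G s → ∃ x : X, GConvergesTo G s x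

/-- GP-Cauchy sequence: lim_{n,m} GP(x_n,x_m,x_m) exists (finite). -/
def GPCauchy {X : Type*} (G : X → X → X → ℝ) (s : ℕ → X) : Prop :=
  ∃ a : ℝ, Tendsto (fun nm : ℕ × ℕ => G (s nm.1) (s nm.2) (s nm.2)) atTop (nhds a)

/-- GP-convergence of a sequence to a point. -/
def GPConvergesTo {X : Type*} (G : X → X → X → ℝ) (s : ℕ → X) (x : X) : Prop :=
  Tendsto (fun n => G (s n) (s n) (s n)) atTop (nhds (G x x x)) ∧
  Tendsto (fun n => G x x (s n)) atTop (nhds (G x x x))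

/-- GP-completeness. -/
def GPComplete {X : Type*} (G : X → X → X → ℝ) : Prop :=
  ∀ s : ℕ → X, GPCauchy G s → ∃ x : X, GPConvergesTo G s x ∧
    Tendsto (fun nm : ℕ × ℕ => G (s nm.1) (s nm.2) (s nm.2)) atTop (nhds (G x x x))

/-- The topology generated by the open GP-balls. -/
def GPTopology {X : Type*} (G : X → X → X → ℝ) : TopologicalSpace X :=
  TopologicalSpace.generateFrom
    { s | ∃ (x₀ : X) (ε : ℝ), 0 < ε ∧ s = { y | G x₀ y y < ε + G x₀ x₀ x₀ } }

theorem stmt_0 {X : Type*} (p : X → X → ℝ) (hp : IsPartialMetric p)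
    (Gp : X → X → X → ℝ)
    (hGp : ∀ x y z, Gp x y z = p x y + p y z + p x z - p x x - p y y - p z z) :
    IsGMetric Gp ∧ ∀ x y, Gp x y y = Gp y x x := by
  obtain ⟨h0, h1, h2, h3, h4⟩ := hp
  refine ⟨⟨?_, ?_, ?_, ?_, ?_, ?_⟩, ?_⟩
  · intro x y z
    have a1 := h2 x y
    have a2 := h2 y z
    have a3 : p z z ≤ p x z := by rw [h3 x z]; exact h2 z x
    rw [hGp]; linarith
  · intro x; rw [hGp]; ring
  · intro x y hxy
    have a1 := h2 x y
    have a2 : p y y ≤ p x y := by rw [h3 x y]; exact h2 y x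
    have hne : ¬(p x x = p x y ∧ p x y = p y y) := fun h => hxy ((h1 x y).2 h)
    rw [hGp]
    by_contra hle
    push_neg at hle
    exact hne ⟨by linarith, by linarith⟩
  · intro x y z _
    have tri : p x y ≤ p x z + p z y - p z z := h4 x z y
    have hs := h3 z y
    rw [hGp, hGp]; linarith
  · intro x y z
    have := h3 x y; have := h3 y z; have := h3 x z
    constructor <;> · rw [hGp, hGp]; linarith
  · intro x y z a
    have t1 : p x y ≤ p x a + p a y - p a a := h4 x a y
    have t2 : p x z ≤ p x a + p a z - p a a := h4 x a z
    rw [hGp, hGp, hGp]; linarith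
  · intro x y
    have := h3 x y
    rw [hGp, hGp]; linarith
end

section
/- Let (X, p) be a partial metric space and G_p its associated G-metric defined by G_p(x,y,z) = p(x,y) + p(y,z) + p(x,z) - p(x,x) - p(y,y) - p(z,z). Then a sequence {x_n} in X is Cauchy in (X, p) if and only if it is G-Cauchy in (X, G_p). -/
open Filter Topology

theorem stmt_1 {X : Type*} (p : X → X → ℝ) (hp : IsPartialMetric p)
    (Gp : X → X → X → ℝ)
    (hGp : ∀ x y z, Gp x y z = p x y + p y z + p x z - p x x - p y y - p z z)
    (s : ℕ → X) :
    PCauchy p s ↔ GCauchy Gp s := by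
  obtain ⟨hnn, heq, hsmall, hsym, htri⟩ := hp
  constructor
  · rintro ⟨a, ha⟩
    intro ε hε
    rw [Metric.tendsto_atTop] at ha
    obtain ⟨N, hN⟩ := ha (ε/6) (by linarith)
    refine ⟨N.1 ⊔ N.2, fun n hn m hm l hl => ?_⟩
    have key : ∀ i ≥ N.1 ⊔ N.2, ∀ j ≥ N.1 ⊔ N.2, |p (s i) (s j) - a| < ε/6 := by
      intro i hi j hj
      have := hN (i, j) ⟨le_trans le_sup_left hi, le_trans le_sup_right hj⟩
      simpa [Real.dist_eq] using this
    have h1 := key n hn m hm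
    have h2 := key m hm l hl
    have h3 := key n hn l hl
    have h4 := key n hn n hn
    have h5 := key m hm m hm
    have h6 := key l hl l hl
    rw [hGp]
    rw [abs_lt] at h1 h2 h3 h4 h5 h6
    linarith [h1.1, h1.2, h2.1, h2.2, h3.1, h3.2, h4.1, h4.2, h5.1, h5.2, h6.1, h6.2]
  · intro h
    have hca : CauchySeq (fun n => p (s n) (s n)) := by
      rw [Metric.cauchySeq_iff]
      intro ε hε
      obtain ⟨k, hk⟩ := h ε hε
      refine ⟨k, fun n hn m hm => ?_⟩
      have hG := hk n hn m hm m hm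
      rw [hGp] at hG
      have h1 := hsmall (s n) (s m)
      have h2 := hsmall (s m) (s n)
      have h3 := hsym (s n) (s m)
      rw [Real.dist_eq, abs_lt]
      constructor <;> linarith
    obtain ⟨a, ha⟩ := cauchySeq_tendsto_of_complete hca
    refine ⟨a, ?_⟩
    rw [Metric.tendsto_atTop] at ha ⊢
    intro ε hε
    obtain ⟨k1, hk1⟩ := h (ε/2) (by linarith)
    obtain ⟨k2, hk2⟩ := ha (ε/2) (by linarith)
    refine ⟨(k1 ⊔ k2, k1 ⊔ k2), fun nm hnm => ?_⟩
    obtain ⟨n, m⟩ := nm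
    obtain ⟨hn, hm⟩ := Prod.mk_le_mk.mp hnm
    have hG := hk1 n (le_trans le_sup_left hn) m (le_trans le_sup_left hm)
      m (le_trans le_sup_left hm)
    rw [hGp] at hG
    have h1 := hsmall (s n) (s m)
    have h2 := hsmall (s m) (s n)
    have h3 := hsym (s n) (s m)
    have h4 := hk2 n (le_trans le_sup_right hn)
    have h5 := hk2 m (le_trans le_sup_right hm)
    rw [Real.dist_eq, abs_lt] at h4 h5 ⊢
    constructor <;> simp only [] <;> [linarith [h4.1, h5.1]; linarith [h4.2, h5.2]]
end

section
/- Let (X, p) be a partial metric space with associated G-metric G_p. For a sequence {x_n} and a point x ∈ X: lim_{n,m→∞} G_p(x, x_n, x_m) = 0 if and only if p(x,x) = lim_{n,m→∞} p(x_n, x_m) = lim_{n→∞} p(x_n, x_n) = lim_{n→∞} p(x, x_n). -/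
open Filter Topology

theorem stmt_3 {X : Type*} (p : X → X → ℝ) (hp : IsPartialMetric p)
    (Gp : X → X → X → ℝ)
    (hGp : ∀ x y z, Gp x y z = p x y + p y z + p x z - p x x - p y y - p z z)
    (s : ℕ → X) (x : X) :
    Tendsto (fun nm : ℕ × ℕ => Gp x (s nm.1) (s nm.2)) atTop (nhds 0) ↔
      (Tendsto (fun nm : ℕ × ℕ => p (s nm.1) (s nm.2)) atTop (nhds (p x x)) ∧
       Tendsto (fun n => p (s n) (s n)) atTop (nhds (p x x)) ∧
       Tendsto (fun n => p x (s n)) atTop (nhds (p x x))) := by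
  obtain ⟨hpos, heq, hself, hsym, htri⟩ := hp
  have hself' : ∀ a b : X, p b b ≤ p a b := fun a b => (hsym a b) ▸ hself b a
  have hfst : Tendsto (fun nm : ℕ × ℕ => nm.1) atTop atTop := by
    rw [← prod_atTop_atTop_eq]; exact tendsto_fst
  have hsnd : Tendsto (fun nm : ℕ × ℕ => nm.2) atTop atTop := by
    rw [← prod_atTop_atTop_eq]; exact tendsto_snd
  have diag : Tendsto (fun n : ℕ => ((n, n) : ℕ × ℕ)) atTop atTop := by
    rw [← prod_atTop_atTop_eq]; exact tendsto_id.prodMk tendsto_id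
  constructor
  · intro h
    -- bracket 1: p x (s n) - p x x → 0
    have hb1 : Tendsto (fun nm : ℕ × ℕ => p x (s nm.1) - p x x) atTop (nhds 0) := by
      refine squeeze_zero (fun nm => sub_nonneg.2 (hself x _)) (fun nm => ?_) h
      rw [hGp]
      have h1 := hself (s nm.1) (s nm.2)
      have h2 := hself' x (s nm.2)
      linarith
    have hx1 : Tendsto (fun n : ℕ => p x (s n)) atTop (nhds (p x x)) := by
      have := (hb1.comp diag).add (tendsto_const_nhds (x := p x x))
      simpa using this
    -- p (s n) (s n) → p x x, via diagonal of Gp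
    have hGdiag : Tendsto (fun n : ℕ => Gp x (s n) (s n)) atTop (nhds 0) := h.comp diag
    have hx2 : Tendsto (fun n : ℕ => p (s n) (s n)) atTop (nhds (p x x)) := by
      have h2 : Tendsto (fun n : ℕ =>
          2 * p x (s n) - p x x - Gp x (s n) (s n)) atTop
          (nhds (2 * p x x - p x x - 0)) :=
        ((hx1.const_mul 2).sub tendsto_const_nhds).sub hGdiag
      have heqf : (fun n : ℕ => p (s n) (s n)) =
          fun n : ℕ => 2 * p x (s n) - p x x - Gp x (s n) (s n) := by
        funext n; rw [hGp]; ring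
      rw [heqf]
      convert h2 using 2; ring
    -- p (s n) (s m) → p x x
    have hb2 : Tendsto (fun nm : ℕ × ℕ =>
        p (s nm.1) (s nm.2) - p (s nm.1) (s nm.1)) atTop (nhds 0) := by
      refine squeeze_zero (fun nm => sub_nonneg.2 (hself _ _)) (fun nm => ?_) h
      rw [hGp]
      have h1 := hself' x (s nm.2)
      have h2 := hself x (s nm.1)
      linarith
    have hx0 : Tendsto (fun nm : ℕ × ℕ => p (s nm.1) (s nm.2)) atTop (nhds (p x x)) := by
      have := hb2.add (hx2.comp hfst)
      simpa using this
    exact ⟨hx0, hx2, hx1⟩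
  · rintro ⟨h1, h2, h3⟩
    have H : Tendsto (fun nm : ℕ × ℕ =>
        p x (s nm.1) + p (s nm.1) (s nm.2) + p x (s nm.2)
          - p x x - p (s nm.1) (s nm.1) - p (s nm.2) (s nm.2)) atTop
        (nhds (p x x + p x x + p x x - p x x - p x x - p x x)) :=
      ((((h3.comp hfst).add h1).add (h3.comp hsnd)).sub tendsto_const_nhds).sub
        (h2.comp hfst) |>.sub (h2.comp hsnd)
    have heqf : (fun nm : ℕ × ℕ => Gp x (s nm.1) (s nm.2)) =
        fun nm : ℕ × ℕ =>
          p x (s nm.1) + p (s nm.1) (s nm.2) + p x (s nm.2)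
            - p x x - p (s nm.1) (s nm.1) - p (s nm.2) (s nm.2) := by
      funext nm; rw [hGp]
    rw [heqf]
    convert H using 2
    ring
end

section
/- Let (X, GP) be a GP-metric space. Define G_GP(x,y,z) = GP(x,y,y) + GP(x,z,z) + GP(y,z,z) - GP(x,x,x) - GP(y,y,y) - GP(z,z,z). Then (X, G_GP) is a symmetric G-metric space. -/
open Filter Topology

theorem stmt_11 {X : Type*} (G : X → X → X → ℝ) (hG : IsGPMetric G)
    (GG : X → X → X → ℝ)
    (hGG : ∀ x y z, GG x y z =
      G x y y + G x z z + G y z z - G x x x - G y y y - G z z z) :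
    IsGMetric GG ∧ ∀ x y, GG x y y = GG y x x := by
  obtain ⟨h0, h1, h2, h3, h4⟩ := hG
  -- symmetry helpers
  have key : ∀ x y : X, G x y y = G y x x := by
    intro x y
    have a1 := (h1 y x x).2  -- G y y x ≤ G y x x
    have a2 := (h1 x y y).2  -- G x x y ≤ G x y y
    have e1 : G y y x = G x y y := by
      rw [(h2 y y x).2, (h2 y x y).1]
    have e2 : G x x y = G y x x := by
      rw [(h2 x x y).2, (h2 x y x).1]
    linarith
  have tri : ∀ x y z : X, G x z z ≤ G x y y + G y z z - G y y y := by
    intro x y z; exact h3 x z z y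
  have selfle : ∀ x y : X, G x x x ≤ G x y y := by
    intro x y
    have a1 := (h1 x y x).1  -- G x x x ≤ G x x y
    have e2 : G x x y = G y x x := by
      rw [(h2 x x y).2, (h2 x y x).1]
    have := key x y
    linarith
  refine ⟨⟨?_, ?_, ?_, ?_, ?_, ?_⟩, ?_⟩
  · intro x y z
    rw [hGG]
    have k1 := selfle x y
    have k2 := selfle y z
    have k3 := selfle z x
    have k4 := key z x
    linarith
  · intro x
    rw [hGG]; ring
  · intro x y hxy
    rw [hGG]
    by_contra h
    push_neg at h
    have k1 := selfle x y
    have k2 := selfle y x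
    have k3 := key x y
    have e1 : G x y y = G x x x := by linarith
    have e2 : G x y y = G y y y := by linarith
    exact hxy (h4 x y y e1 e2 e2).1
  · intro x y z _
    rw [hGG, hGG]
    have t := tri x z y  -- G x y y ≤ G x z z + G z y y - G z z z
    have k := key y z
    linarith
  · intro x y z
    constructor
    · rw [hGG, hGG]
      have := key x y
      linarith
    · rw [hGG, hGG]
      have := key y z
      linarith
  · intro x y z a
    rw [hGG, hGG, hGG]
    have t1 := tri x a y
    have t2 := tri x a z
    linarith
  · intro x y
    rw [hGG, hGG]
    have := key x y
    linarith
end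

section
/- Let (X, GP) be a GP-metric space with associated G-metric G_GP(x,y,z) = GP(x,y,y)+GP(x,z,z)+GP(y,z,z)-GP(x,x,x)-GP(y,y,y)-GP(z,z,z). Then a sequence is GP-Cauchy in (X, GP) if and only if it is G-Cauchy in (X, G_GP), and (X, GP) is GP-complete if and only if (X, G_GP) is G-complete. -/
open Filter Topology

theorem stmt_12 {X : Type*} (G : X → X → X → ℝ) (hG : IsGPMetric G)
    (GG : X → X → X → ℝ)
    (hGG : ∀ x y z, GG x y z =
      G x y y + G x z z + G y z z - G x x x - G y y y - G z z z) :
    (∀ s : ℕ → X, GPCauchy G s ↔ GCauchy GG s) ∧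
    (GPComplete G ↔ GComplete GG) := by
  obtain ⟨hpos, hle, hsym, htri, hsep⟩ := hG
  have sym1 : ∀ x y : X, G x y y = G y y x := by
    intro x y
    rw [(hsym x y y).1, (hsym y x y).2]
  have half : ∀ x y : X, G x x y ≤ G x y y := fun x y => (hle x y y).2
  have mono1 : ∀ x y : X, G x x x ≤ G x y y := fun x y =>
    le_trans (hle x y y).1 (half x y)
  have diag : ∀ x y : X, G y y y ≤ G x y y := by
    intro x y
    have h := (hle y y x).2
    rwa [← sym1 x y] at h
  have double : ∀ x y : X, G x y y ≤ 2 * G x x y - G x x x := by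
    intro x y
    have h := htri y y x x
    have e1 : G y x x = G x x y := by rw [(hsym y x x).1, (hsym x y x).2]
    have e2 : G x y x = G x x y := (hsym x y x).2
    have e3 : G x y y = G y y x := sym1 x y
    linarith
  have GGd : ∀ u v : X, GG u v v = 2 * G u v v - G u u u - G v v v := by
    intro u v; rw [hGG]; ring
  have part1 : ∀ s : ℕ → X, GPCauchy G s ↔ GCauchy GG s := by
    intro s
    constructor
    · rintro ⟨a, ha⟩
      rw [Metric.tendsto_atTop] at ha
      intro ε hε
      obtain ⟨N, hN⟩ := ha (ε/6) (by linarith)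
      refine ⟨max N.1 N.2, fun n hn m hm l hl => ?_⟩
      have key : ∀ i j : ℕ, max N.1 N.2 ≤ i → max N.1 N.2 ≤ j →
          |G (s i) (s j) (s j) - a| < ε/6 := by
        intro i j hi hj
        have := hN (i, j) ⟨le_trans (le_max_left _ _) hi, le_trans (le_max_right _ _) hj⟩
        rwa [Real.dist_eq] at this
      have h1 := key n m hn hm
      have h2 := key n l hn hl
      have h3 := key m l hm hl
      have h4 := key n n hn hn
      have h5 := key m m hm hm
      have h6 := key l l hl hl
      rw [abs_lt] at h1 h2 h3 h4 h5 h6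
      rw [hGG]
      linarith
    · intro hC
      have habs : ∀ n m : ℕ,
          |G (s n) (s n) (s n) - G (s m) (s m) (s m)| ≤ GG (s n) (s m) (s m) := by
        intro n m
        have h1 := mono1 (s n) (s m)
        have h2 := diag (s n) (s m)
        rw [GGd (s n) (s m), abs_le]
        constructor <;> linarith
      have GGnn : ∀ n m : ℕ, 0 ≤ GG (s n) (s m) (s m) := by
        intro n m
        have h1 := mono1 (s n) (s m)
        have h2 := diag (s n) (s m)
        rw [GGd (s n) (s m)]
        linarith
      have hcs : CauchySeq (fun n => G (s n) (s n) (s n)) := by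
        rw [Metric.cauchySeq_iff]
        intro ε hε
        obtain ⟨k, hk⟩ := hC ε hε
        refine ⟨k, fun m hm n hn => ?_⟩
        rw [Real.dist_eq]
        exact lt_of_le_of_lt (habs m n) (hk m hm n hn n hn)
      obtain ⟨a, ha⟩ := cauchySeq_tendsto_of_complete hcs
      refine ⟨a, ?_⟩
      rw [Metric.tendsto_atTop] at ha ⊢
      intro ε hε
      obtain ⟨N1, hN1⟩ := ha (ε/3) (by linarith)
      obtain ⟨k2, hk2⟩ := hC (ε/3) (by linarith)
      refine ⟨(max N1 k2, max N1 k2), fun nm hnm => ?_⟩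
      have hn : max N1 k2 ≤ nm.1 := hnm.1
      have hm : max N1 k2 ≤ nm.2 := hnm.2
      have h1 : |G (s nm.1) (s nm.1) (s nm.1) - a| < ε/3 := by
        have := hN1 nm.1 (le_trans (le_max_left _ _) hn); rwa [Real.dist_eq] at this
      have h2 : |G (s nm.2) (s nm.2) (s nm.2) - a| < ε/3 := by
        have := hN1 nm.2 (le_trans (le_max_left _ _) hm); rwa [Real.dist_eq] at this
      have h3 : GG (s nm.1) (s nm.2) (s nm.2) < ε/3 :=
        hk2 nm.1 (le_trans (le_max_right _ _) hn) nm.2 (le_trans (le_max_right _ _) hm)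
          nm.2 (le_trans (le_max_right _ _) hm)
      have h4 : 0 ≤ GG (s nm.1) (s nm.2) (s nm.2) := GGnn nm.1 nm.2
      have heq := GGd (s nm.1) (s nm.2)
      rw [abs_lt] at h1 h2
      rw [Real.dist_eq, abs_lt]
      constructor <;> linarith
  refine ⟨part1, ?_, ?_⟩
  · -- GPComplete → GComplete
    intro hcomp s hs
    obtain ⟨x, hconv, hlim⟩ := hcomp s ((part1 s).2 hs)
    have hc : Tendsto (fun n => G (s n) (s n) (s n)) atTop (𝓝 (G x x x)) := hconv.1
    have hx2 : Tendsto (fun n => G x x (s n)) atTop (𝓝 (G x x x)) := hconv.2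
    have hxp : Tendsto (fun n => G x (s n) (s n)) atTop (𝓝 (G x x x)) := by
      have hupper : Tendsto (fun n => 2 * G x x (s n) - G x x x) atTop (𝓝 (G x x x)) := by
        have h2 := (hx2.const_mul 2).sub_const (G x x x)
        have he : 2 * G x x x - G x x x = G x x x := by ring
        rwa [he] at h2
      exact tendsto_of_tendsto_of_tendsto_of_le_of_le hx2 hupper
        (fun n => half x (s n)) (fun n => double x (s n))
    refine ⟨x, fun ε hε => ?_⟩
    rw [Metric.tendsto_atTop] at hlim hc hxp
    obtain ⟨N1, hN1⟩ := hlim (ε/5) (by linarith)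
    obtain ⟨N2, hN2⟩ := hc (ε/5) (by linarith)
    obtain ⟨N3, hN3⟩ := hxp (ε/5) (by linarith)
    refine ⟨max (max N1.1 N1.2) (max N2 N3), fun n hn m hm => ?_⟩
    have hn1 : N1.1 ≤ n := le_trans (le_trans (le_max_left _ _) (le_max_left _ _)) hn
    have hm1 : N1.2 ≤ m := le_trans (le_trans (le_max_right _ _) (le_max_left _ _)) hm
    have hn2 : N2 ≤ n := le_trans (le_trans (le_max_left _ _) (le_max_right _ _)) hn
    have hm2 : N2 ≤ m := le_trans (le_trans (le_max_left _ _) (le_max_right _ _)) hm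
    have hn3 : N3 ≤ n := le_trans (le_trans (le_max_right _ _) (le_max_right _ _)) hn
    have hm3 : N3 ≤ m := le_trans (le_trans (le_max_right _ _) (le_max_right _ _)) hm
    have h3 : |G (s n) (s m) (s m) - G x x x| < ε/5 := by
      have := hN1 (n, m) ⟨hn1, hm1⟩; rwa [Real.dist_eq] at this
    have h4 : |G (s n) (s n) (s n) - G x x x| < ε/5 := by
      have := hN2 n hn2; rwa [Real.dist_eq] at this
    have h5 : |G (s m) (s m) (s m) - G x x x| < ε/5 := by
      have := hN2 m hm2; rwa [Real.dist_eq] at this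
    have h1 : |G x (s n) (s n) - G x x x| < ε/5 := by
      have := hN3 n hn3; rwa [Real.dist_eq] at this
    have h2 : |G x (s m) (s m) - G x x x| < ε/5 := by
      have := hN3 m hm3; rwa [Real.dist_eq] at this
    rw [abs_lt] at h1 h2 h3 h4 h5
    rw [hGG]
    linarith
  · -- GComplete → GPComplete
    intro hcomp s hs
    obtain ⟨a, ha⟩ := hs
    obtain ⟨x, hconv⟩ := hcomp s ((part1 s).1 ⟨a, ha⟩)
    have hdiag : Tendsto (fun n : ℕ => (n, n)) atTop (atTop : Filter (ℕ × ℕ)) := by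
      rw [tendsto_atTop_atTop]
      intro b
      exact ⟨max b.1 b.2, fun n hn =>
        ⟨le_trans (le_max_left _ _) hn, le_trans (le_max_right _ _) hn⟩⟩
    have hc : Tendsto (fun n => G (s n) (s n) (s n)) atTop (𝓝 a) := ha.comp hdiag
    have hp' : Tendsto (fun n => G x (s n) (s n)) atTop (𝓝 ((G x x x + a)/2)) := by
      rw [Metric.tendsto_atTop] at hc ⊢
      intro ε hε
      obtain ⟨k1, hk1⟩ := hconv ε hε
      obtain ⟨k2, hk2⟩ := hc ε hε
      refine ⟨max k1 k2, fun n hn => ?_⟩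
      have hGGx : GG x (s n) (s n) = 2 * G x (s n) (s n) - G x x x - G (s n) (s n) (s n) := by
        rw [hGG]; ring
      have b1 : GG x (s n) (s n) < ε :=
        hk1 n (le_trans (le_max_left _ _) hn) n (le_trans (le_max_left _ _) hn)
      have b0 : 0 ≤ GG x (s n) (s n) := by
        have h1 := mono1 x (s n)
        have h2 := diag x (s n)
        linarith
      have hcn : |G (s n) (s n) (s n) - a| < ε := by
        have := hk2 n (le_trans (le_max_right _ _) hn); rwa [Real.dist_eq] at this
      rw [abs_lt] at hcn
      rw [Real.dist_eq, abs_lt]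
      constructor <;> linarith
    have ht_le : G x x x ≤ (G x x x + a)/2 := ge_of_tendsto' hp' (fun n => mono1 x (s n))
    have ha_le : a ≤ (G x x x + a)/2 :=
      le_of_tendsto_of_tendsto' hc hp' (fun n => diag x (s n))
    have hat : a = G x x x := by linarith
    have he : (G x x x + a)/2 = G x x x := by rw [hat]; ring
    rw [he] at hp'
    rw [hat] at hc ha
    have hxx : Tendsto (fun n => G x x (s n)) atTop (𝓝 (G x x x)) :=
      tendsto_of_tendsto_of_tendsto_of_le_of_le tendsto_const_nhds hp'
        (fun n => (hle x (s n) (s n)).1) (fun n => half x (s n))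
    exact ⟨x, ⟨hc, hxx⟩, ha⟩
end

section
/- Let (X, GP) be a GP-metric space with associated G-metric G_GP. For a sequence {x_n} and x ∈ X: lim_{n,m→∞} G_GP(x, x_n, x_m) = 0 if and only if GP(x,x,x) = lim_{n→∞} GP(x, x_n, x_n) = lim_{n,m→∞} GP(x_n, x_m, x_m) = lim_{n→∞} GP(x_n, x_n, x_n). -/
open Filter Topology

theorem stmt_13 {X : Type*} (G : X → X → X → ℝ) (hG : IsGPMetric G)
    (GG : X → X → X → ℝ)
    (hGG : ∀ x y z, GG x y z =
      G x y y + G x z z + G y z z - G x x x - G y y y - G z z z)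
    (s : ℕ → X) (x : X) :
    Tendsto (fun nm : ℕ × ℕ => GG x (s nm.1) (s nm.2)) atTop (nhds 0) ↔
      (Tendsto (fun n => G x (s n) (s n)) atTop (nhds (G x x x)) ∧
       Tendsto (fun nm : ℕ × ℕ => G (s nm.1) (s nm.2) (s nm.2)) atTop (nhds (G x x x)) ∧
       Tendsto (fun n => G (s n) (s n) (s n)) atTop (nhds (G x x x))) := by
  obtain ⟨hpos, hGP2, hsym, -, -⟩ := hG
  have hsym3 : ∀ y : X, G y y x = G x y y := fun y => by
    rw [(hsym y y x).2, (hsym y x y).1]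
  have h1 : ∀ y : X, G x x x ≤ G x y y := fun y =>
    le_trans (hGP2 x y y).1 (hGP2 x y y).2
  have h2 : ∀ y : X, G y y y ≤ G x y y := fun y => (hsym3 y) ▸ (hGP2 y x x).1
  have h3 : ∀ n m : ℕ, G (s n) (s n) (s n) ≤ G (s n) (s m) (s m) := fun n m =>
    le_trans (hGP2 (s n) (s m) (s m)).1 (hGP2 (s n) (s m) (s m)).2
  set A : ℕ → ℝ := fun n => G x (s n) (s n) - G x x x with hAdef
  set C : ℕ → ℝ := fun n => G x (s n) (s n) - G (s n) (s n) (s n) with hCdef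
  set B : ℕ × ℕ → ℝ :=
    fun nm => G (s nm.1) (s nm.2) (s nm.2) - G (s nm.1) (s nm.1) (s nm.1) with hBdef
  have key : ∀ nm : ℕ × ℕ, GG x (s nm.1) (s nm.2) = A nm.1 + C nm.2 + B nm := by
    intro nm; simp only [hGG, hAdef, hCdef, hBdef]; ring
  have hA : ∀ n, 0 ≤ A n := fun n => sub_nonneg.2 (h1 _)
  have hC : ∀ n, 0 ≤ C n := fun n => sub_nonneg.2 (h2 _)
  have hB : ∀ nm : ℕ × ℕ, 0 ≤ B nm := fun nm => sub_nonneg.2 (h3 _ _)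
  have htfst : Tendsto (fun nm : ℕ × ℕ => nm.1) atTop atTop := by
    rw [← prod_atTop_atTop_eq]; exact tendsto_fst
  have htsnd : Tendsto (fun nm : ℕ × ℕ => nm.2) atTop atTop := by
    rw [← prod_atTop_atTop_eq]; exact tendsto_snd
  have hdiag : Tendsto (fun n : ℕ => ((n, n) : ℕ × ℕ)) atTop atTop := by
    rw [← prod_atTop_atTop_eq]; exact tendsto_id.prodMk tendsto_id
  constructor
  · intro h
    have hd : Tendsto (fun n => A n + C n) atTop (nhds 0) := by
      have := h.comp hdiag
      have heq : (fun nm : ℕ × ℕ => GG x (s nm.1) (s nm.2)) ∘ (fun n : ℕ => ((n, n) : ℕ × ℕ))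
          = fun n => A n + C n := by
        funext n
        simp only [Function.comp_apply, key ⟨n, n⟩, hBdef]
        ring
      rwa [heq] at this
    have hA0 : Tendsto A atTop (nhds 0) :=
      squeeze_zero hA (fun n => le_add_of_nonneg_right (hC n)) hd
    have hC0 : Tendsto C atTop (nhds 0) :=
      squeeze_zero hC (fun n => le_add_of_nonneg_left (hA n)) hd
    have hB0 : Tendsto B atTop (nhds 0) := by
      have h' := (h.sub (hA0.comp htfst)).sub (hC0.comp htsnd)
      have heq : (fun nm : ℕ × ℕ => GG x (s nm.1) (s nm.2) - A nm.1 - C nm.2) = B := by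
        funext nm; rw [key nm]; ring
      simpa [heq] using h'
    refine ⟨?_, ?_, ?_⟩
    · have := hA0.add_const (G x x x)
      simpa [hAdef] using this
    · have h' := (hB0.add ((hA0.sub hC0).comp htfst)).add_const (G x x x)
      have heq : (fun nm : ℕ × ℕ => B nm + (A nm.1 - C nm.1) + G x x x)
          = fun nm : ℕ × ℕ => G (s nm.1) (s nm.2) (s nm.2) := by
        funext nm; simp only [hAdef, hBdef, hCdef]; ring
      simpa [heq, Function.comp] using h'
    · have h' := (hA0.sub hC0).add_const (G x x x)
      have heq : (fun n => A n - C n + G x x x) = fun n => G (s n) (s n) (s n) := by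
        funext n; simp only [hAdef, hCdef]; ring
      simpa [heq] using h'
  · rintro ⟨ht1, ht2, ht3⟩
    have hA0 : Tendsto A atTop (nhds 0) := by
      simpa using ht1.sub_const (G x x x)
    have hC0 : Tendsto C atTop (nhds 0) := by
      simpa using ht1.sub ht3
    have hB0 : Tendsto B atTop (nhds 0) := by
      have := ht2.sub (ht3.comp htfst)
      simpa [hBdef, Function.comp] using this
    have h' := ((hA0.comp htfst).add (hC0.comp htsnd)).add hB0
    have heq : (fun nm : ℕ × ℕ => A nm.1 + C nm.2 + B nm)
        = fun nm : ℕ × ℕ => GG x (s nm.1) (s nm.2) := by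
      funext nm; rw [key nm]
    simpa [heq, Function.comp] using h'
end
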